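/- arXiv:1705.05198 — 3 statements merged into one kernel-verified Lean document; each statement's English description precedes it below -/
import Mathlib

section
/- Let X be a binomial random variable with parameters m and q (m trials, success probability q ∈ (0,1)), and let s be an integer with 0 ≤ s < mq. Then P(X ≤ s) ≤ ((m - s) q / (mq - s)) · C(m, s) q^s (1-q)^{m-s}. In particular, if mq → ∞ and s is fixed, then P(X ≤ s) ~ C(m, s) q^s (1-q)^{m-s}. -/
open Finset Filter

private lemma step_ratio6 (m s : ℕ) (q : ℝ) (hsm : s + 1 ≤ m) :
    (m.choose s : ℝ) * q ^ s * (1 - q) ^ (m - s) * (((m:ℝ) - s) * q)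
      = (m.choose (s+1) : ℝ) * q ^ (s+1) * (1 - q) ^ (m - (s+1)) * (((s:ℝ)+1) * (1 - q)) := by
  have hsm' : s ≤ m := le_trans (Nat.le_succ s) hsm
  have h1 : (m.choose (s+1) : ℝ) * ((s:ℝ)+1) = (m.choose s : ℝ) * ((m:ℝ) - s) := by
    have h := Nat.choose_succ_right_eq m s
    have h2 : ((m.choose (s+1) * (s+1) : ℕ) : ℝ) = ((m.choose s * (m - s) : ℕ) : ℝ) := by
      exact_mod_cast congrArg (Nat.cast : ℕ → ℝ) h
    push_cast [Nat.cast_sub hsm'] at h2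
    linarith
  have h2 : (1 - q) ^ (m - s) = (1 - q) ^ (m - (s+1)) * (1 - q) := by
    have h3 : m - s = (m - (s+1)) + 1 := by omega
    rw [h3, pow_succ]
  rw [h2, pow_succ]
  linear_combination (-(q ^ s * q * (1 - q) ^ (m - (s+1)) * (1 - q))) * h1

private lemma tail_bound6 (m : ℕ) (q : ℝ) (hq0 : 0 < q) (hq1 : q < 1) :
    ∀ s : ℕ, (s : ℝ) < m * q →
      ∑ k ∈ Finset.range (s + 1), (m.choose k : ℝ) * q ^ k * (1 - q) ^ (m - k) ≤
        ((((m:ℝ) + 1 - s) * q) / (((m:ℝ) + 1) * q - s)) *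
          ((m.choose s : ℝ) * q ^ s * (1 - q) ^ (m - s)) := by
  intro s
  induction s with
  | zero =>
    intro _
    have hd : ((m:ℝ) + 1) * q ≠ 0 := by positivity
    rw [Finset.sum_range_one]
    simp only [Nat.cast_zero]
    have : (((m:ℝ) + 1 - 0) * q) / (((m:ℝ) + 1) * q - 0) = 1 := by
      rw [sub_zero, sub_zero, div_self hd]
    rw [this, one_mul]
  | succ s ih =>
    intro hs1
    have hs1' : (s:ℝ) + 1 < m * q := by push_cast at hs1; linarith
    have hs : (s:ℝ) < m * q := by linarith
    have hq1' : 0 < 1 - q := by linarith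
    have hmq : (m:ℝ) * q < m := by
      have hm0 : (0:ℝ) < m := by nlinarith
      nlinarith
    have hsmR : (s:ℝ) + 1 < m := by linarith
    have hsm : s + 1 ≤ m := by exact_mod_cast hsmR.le
    have hMS : (0:ℝ) < (m:ℝ) - s := by linarith
    have hd1 : (0:ℝ) < ((m:ℝ) + 1) * q - s := by nlinarith
    have hd2 : (0:ℝ) < ((m:ℝ) + 1) * q - ((s:ℝ)+1) := by nlinarith
    set t := (m.choose (s+1) : ℝ) * q ^ (s+1) * (1 - q) ^ (m - (s+1)) with ht
    have htnn : 0 ≤ t := by positivity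
    have hts : (m.choose s : ℝ) * q ^ s * (1 - q) ^ (m - s)
        = t * (((s:ℝ)+1) * (1 - q)) / (((m:ℝ) - s) * q) := by
      have h := step_ratio6 m s q hsm
      rw [eq_div_iff (ne_of_gt (mul_pos hMS hq0))]
      linear_combination h
    rw [Finset.sum_range_succ]
    have hkey : ((((m:ℝ) + 1 - s) * q) / (((m:ℝ) + 1) * q - s)) *
          ((((s:ℝ)+1) * (1 - q)) / (((m:ℝ) - s) * q)) + 1
        ≤ (((m:ℝ) - s) * q) / (((m:ℝ) + 1) * q - ((s:ℝ)+1)) := by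
      have step1 : ((((m:ℝ) + 1 - s) * q) / (((m:ℝ) + 1) * q - s)) *
            ((((s:ℝ)+1) * (1 - q)) / (((m:ℝ) - s) * q))
          ≤ (((s:ℝ)+1) * (1 - q)) / (((m:ℝ) + 1) * q - ((s:ℝ)+1)) := by
        rw [div_mul_div_comm, div_le_div_iff₀ (by positivity) hd2]
        have hP : (0:ℝ) ≤ ((s:ℝ)+1) * (1 - q) * q * (((m:ℝ)+1) * (1 - q)) := by positivity
        nlinarith [hP]
      have step2 : (((s:ℝ)+1) * (1 - q)) / (((m:ℝ) + 1) * q - ((s:ℝ)+1)) + 1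
          = (((m:ℝ) - s) * q) / (((m:ℝ) + 1) * q - ((s:ℝ)+1)) := by
        rw [div_add_one hd2.ne']; congr 1
        ring
      linarith
    calc (∑ k ∈ Finset.range (s + 1), (m.choose k : ℝ) * q ^ k * (1 - q) ^ (m - k)) + t
        ≤ ((((m:ℝ) + 1 - s) * q) / (((m:ℝ) + 1) * q - s)) *
            ((m.choose s : ℝ) * q ^ s * (1 - q) ^ (m - s)) + t := by
          linarith [ih hs]
      _ = (((((m:ℝ) + 1 - s) * q) / (((m:ℝ) + 1) * q - s)) *
            ((((s:ℝ)+1) * (1 - q)) / (((m:ℝ) - s) * q)) + 1) * t := by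
          rw [hts]; ring
      _ ≤ ((((m:ℝ) - s) * q) / (((m:ℝ) + 1) * q - ((s:ℝ)+1))) * t :=
          mul_le_mul_of_nonneg_right hkey htnn
      _ = ((((m:ℝ) + 1 - ((s:ℝ)+1)) * q) / (((m:ℝ) + 1) * q - ((s:ℝ)+1))) * t := by
          ring_nf
      _ = (((m:ℝ) + 1 - ((s+1:ℕ):ℝ)) * q) / (((m:ℝ) + 1) * q - ((s+1:ℕ):ℝ)) *
            ((m.choose (s+1) : ℝ) * q ^ (s+1) * (1 - q) ^ (m - (s+1))) := by
          push_cast; rw [ht]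

private lemma part1_6 (m : ℕ) (q : ℝ) (hq0 : 0 < q) (hq1 : q < 1) (s : ℕ)
    (hs : (s : ℝ) < m * q) :
    ∑ k ∈ Finset.range (s + 1), (m.choose k : ℝ) * q ^ k * (1 - q) ^ (m - k) ≤
      (((m : ℝ) - s) * q / (m * q - s)) *
        (m.choose s : ℝ) * q ^ s * (1 - q) ^ (m - s) := by
  have hq1' : 0 < 1 - q := by linarith
  have hd0 : (0:ℝ) < (m:ℝ) * q - s := by linarith
  have hd1 : (0:ℝ) < ((m:ℝ) + 1) * q - s := by nlinarith
  have hcoef : (((m:ℝ) + 1 - s) * q) / (((m:ℝ) + 1) * q - s)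
      ≤ (((m:ℝ) - s) * q) / ((m:ℝ) * q - s) := by
    rw [div_le_div_iff₀ hd1 hd0]
    nlinarith [mul_nonneg (mul_nonneg hq0.le (Nat.cast_nonneg s : (0:ℝ) ≤ s)) hq1'.le]
  have htnn : 0 ≤ (m.choose s : ℝ) * q ^ s * (1 - q) ^ (m - s) := by positivity
  calc ∑ k ∈ Finset.range (s + 1), (m.choose k : ℝ) * q ^ k * (1 - q) ^ (m - k)
      ≤ ((((m:ℝ) + 1 - s) * q) / (((m:ℝ) + 1) * q - s)) *
          ((m.choose s : ℝ) * q ^ s * (1 - q) ^ (m - s)) := tail_bound6 m q hq0 hq1 s hs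
    _ ≤ ((((m:ℝ) - s) * q) / ((m:ℝ) * q - s)) *
          ((m.choose s : ℝ) * q ^ s * (1 - q) ^ (m - s)) :=
        mul_le_mul_of_nonneg_right hcoef htnn
    _ = (((m : ℝ) - s) * q / (m * q - s)) *
        (m.choose s : ℝ) * q ^ s * (1 - q) ^ (m - s) := by ring

/-- Left tail of a binomial by its last term: for 0 ≤ s < mq,
P(X ≤ s) ≤ ((m-s)q/(mq-s)) C(m,s) q^s (1-q)^(m-s); and if s is fixed and
m_n q_n → ∞, then P(X ≤ s) ~ C(m,s) q^s (1-q)^(m-s). -/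
theorem stmt_6 :
    (∀ (m : ℕ) (q : ℝ), 0 < q → q < 1 → ∀ s : ℕ, (s : ℝ) < m * q →
      ∑ k ∈ Finset.range (s + 1), (m.choose k : ℝ) * q ^ k * (1 - q) ^ (m - k) ≤
        (((m : ℝ) - s) * q / (m * q - s)) *
          (m.choose s : ℝ) * q ^ s * (1 - q) ^ (m - s)) ∧
    (∀ (s : ℕ) (m : ℕ → ℕ) (q : ℕ → ℝ), (∀ n, 0 < q n) → (∀ n, q n < 1) →
      Filter.Tendsto (fun n => (m n : ℝ) * q n) Filter.atTop Filter.atTop →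
      Filter.Tendsto
        (fun n =>
          (∑ k ∈ Finset.range (s + 1),
            ((m n).choose k : ℝ) * q n ^ k * (1 - q n) ^ (m n - k)) /
          (((m n).choose s : ℝ) * q n ^ s * (1 - q n) ^ (m n - s)))
        Filter.atTop (nhds 1)) := by
  constructor
  · exact fun m q hq0 hq1 s hs => part1_6 m q hq0 hq1 s hs
  · intro s m q hq0 hq1 hmq
    have hg : Tendsto (fun n => 1 + (s:ℝ) / ((m n : ℝ) * q n - s)) atTop (nhds 1) := by
      have h1 : Tendsto (fun n => (m n : ℝ) * q n - s) atTop atTop :=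
        tendsto_atTop_add_const_right atTop (-(s:ℝ)) hmq |>.congr (fun n => by ring)
      have h2 : Tendsto (fun n => (s:ℝ) / ((m n : ℝ) * q n - s)) atTop (nhds 0) :=
        Tendsto.div_atTop tendsto_const_nhds h1
      simpa using tendsto_const_nhds.add h2
    have hev : ∀ᶠ n in atTop, (s:ℝ) + 1 ≤ (m n : ℝ) * q n := hmq.eventually_ge_atTop _
    apply tendsto_of_tendsto_of_tendsto_of_le_of_le' tendsto_const_nhds hg
    · filter_upwards [hev] with n hn
      have hq1' : 0 < 1 - q n := by linarith [hq1 n]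
      have hsm : (s:ℝ) < m n := by nlinarith [hq0 n, hq1 n]
      have hsm' : s ≤ m n := by exact_mod_cast hsm.le
      have htpos : 0 < ((m n).choose s : ℝ) * q n ^ s * (1 - q n) ^ (m n - s) := by
        have hc : (0:ℝ) < ((m n).choose s : ℝ) := by exact_mod_cast Nat.choose_pos hsm'
        exact mul_pos (mul_pos hc (pow_pos (hq0 n) s)) (pow_pos hq1' _)
      rw [le_div_iff₀ htpos, one_mul]
      apply Finset.single_le_sum (f := fun k => ((m n).choose k : ℝ) * q n ^ k * (1 - q n) ^ (m n - k))
      · intro i _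
        exact mul_nonneg (mul_nonneg (Nat.cast_nonneg _) (pow_nonneg (hq0 n).le i))
          (pow_nonneg hq1'.le _)
      · exact Finset.self_mem_range_succ s
    · filter_upwards [hev] with n hn
      have hq1' : 0 < 1 - q n := by linarith [hq1 n]
      have hs : (s:ℝ) < m n * q n := by linarith
      have hd : (0:ℝ) < (m n : ℝ) * q n - s := by linarith
      have hsm : (s:ℝ) < m n := by nlinarith [hq0 n, hq1 n]
      have hsm' : s ≤ m n := by exact_mod_cast hsm.le
      have htpos : 0 < ((m n).choose s : ℝ) * q n ^ s * (1 - q n) ^ (m n - s) := by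
        have hc : (0:ℝ) < ((m n).choose s : ℝ) := by exact_mod_cast Nat.choose_pos hsm'
        exact mul_pos (mul_pos hc (pow_pos (hq0 n) s)) (pow_pos hq1' _)
      rw [div_le_iff₀ htpos]
      have h1 := part1_6 (m n) (q n) (hq0 n) (hq1 n) s hs
      have hcoef : ((m n : ℝ) - s) * q n / ((m n : ℝ) * q n - s)
          ≤ 1 + (s:ℝ) / ((m n : ℝ) * q n - s) := by
        have heq : 1 + (s:ℝ) / ((m n : ℝ) * q n - s)
            = ((m n : ℝ) * q n) / ((m n : ℝ) * q n - s) := by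
          field_simp
          ring
        rw [heq, div_le_div_iff₀ hd hd]
        nlinarith [mul_nonneg (Nat.cast_nonneg s : (0:ℝ) ≤ s) (hq0 n).le]
      calc (∑ k ∈ Finset.range (s + 1),
            ((m n).choose k : ℝ) * q n ^ k * (1 - q n) ^ (m n - k))
          ≤ (((m n : ℝ) - s) * q n / ((m n : ℝ) * q n - s)) *
              ((m n).choose s : ℝ) * q n ^ s * (1 - q n) ^ (m n - s) := h1
        _ ≤ (1 + (s:ℝ) / ((m n : ℝ) * q n - s)) *
              (((m n).choose s : ℝ) * q n ^ s * (1 - q n) ^ (m n - s)) := by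
            have := mul_le_mul_of_nonneg_right hcoef htpos.le
            linarith [this]
end

section
/- Let p ∈ (0,1), j ≤ ℓ positive integers, g ≥ 1, and for integers r, s ∈ {0, ..., g-1} and D with 0 ≤ D ≤ 2r, define B(r,s,D) = C(⌊j/2⌋, r) p^{2r} (1-p²)^{⌊j/2⌋-r} · C(⌊ℓ/2⌋ - D, s) p^{2s} (1-p²)^{⌊ℓ/2⌋-D-s} (1-p)^D. Then ∑_{r,s=0}^{g-1} B(r,s,D) ≤ (∑_{r=0}^{g-1} C(⌊j/2⌋, r) p^{2r} (1-p²)^{⌊j/2⌋-r}) · (∑_{s=0}^{g-1} C(⌊ℓ/2⌋, s) p^{2s} (1-p²)^{⌊ℓ/2⌋-s}). -/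
/-- Inequality (10): the disjoint-representation double sum is at most the
product of the individual binomial tail sums. -/
theorem stmt_14 (p : ℝ) (hp0 : 0 < p) (hp1 : p < 1) (j ℓ : ℕ) (hj : 1 ≤ j)
    (hjl : j ≤ ℓ) (g : ℕ) (hg : 1 ≤ g) (D : ℕ) (hD : D + g ≤ ℓ / 2) :
    ∑ r ∈ Finset.range g, ∑ s ∈ Finset.range g,
      ((j / 2).choose r : ℝ) * p ^ (2 * r) * (1 - p ^ 2) ^ (j / 2 - r) *
        (((ℓ / 2 - D).choose s : ℝ) * p ^ (2 * s) * (1 - p ^ 2) ^ (ℓ / 2 - D - s) *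
          (1 - p) ^ D) ≤
    (∑ r ∈ Finset.range g,
        ((j / 2).choose r : ℝ) * p ^ (2 * r) * (1 - p ^ 2) ^ (j / 2 - r)) *
      (∑ s ∈ Finset.range g,
        ((ℓ / 2).choose s : ℝ) * p ^ (2 * s) * (1 - p ^ 2) ^ (ℓ / 2 - s)) := by
  have hp2 : (0:ℝ) ≤ 1 - p ^ 2 := by nlinarith
  have hp1' : (0:ℝ) ≤ 1 - p := by linarith
  rw [← Finset.sum_mul_sum]
  apply mul_le_mul_of_nonneg_left
  · apply Finset.sum_le_sum
    intro s hs
    have hsg : s < g := Finset.mem_range.mp hs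
    have hsD : D + s ≤ ℓ / 2 := by omega
    have hchoose : ((ℓ / 2 - D).choose s : ℝ) ≤ ((ℓ / 2).choose s : ℝ) := by
      exact_mod_cast Nat.choose_le_choose s (Nat.sub_le _ D)
    have hpow : (1 - p ^ 2) ^ (ℓ / 2 - D - s) * (1 - p) ^ D
        ≤ (1 - p ^ 2) ^ (ℓ / 2 - s) := by
      have : ℓ / 2 - s = (ℓ / 2 - D - s) + D := by omega
      rw [this, pow_add]
      apply mul_le_mul_of_nonneg_left _ (pow_nonneg hp2 _)
      apply pow_le_pow_left₀ hp1'
      nlinarith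
    calc ((ℓ / 2 - D).choose s : ℝ) * p ^ (2 * s) * (1 - p ^ 2) ^ (ℓ / 2 - D - s) *
          (1 - p) ^ D
        = ((ℓ / 2 - D).choose s : ℝ) * p ^ (2 * s) *
            ((1 - p ^ 2) ^ (ℓ / 2 - D - s) * (1 - p) ^ D) := by ring
      _ ≤ ((ℓ / 2).choose s : ℝ) * p ^ (2 * s) * (1 - p ^ 2) ^ (ℓ / 2 - s) := by
          apply mul_le_mul
          · apply mul_le_mul_of_nonneg_right hchoose (pow_nonneg hp0.le _)
          · exact hpow
          · positivity
          · positivity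
  · apply Finset.sum_nonneg
    intro r _
    positivity
end

section
/- Let m be a positive integer, g ≥ 1 a fixed integer with g - 1 ≤ m, and p = p_n → 0 with m = m_n → ∞ and m p² → ∞. Then ∑_{s=0}^{g-1} C(m, s) p^{2s} (1-p²)^{m-s} ~ C(m, g-1) p^{2(g-1)} (1-p²)^{m-g+1} as n → ∞, i.e., the left tail of a Bin(m, p²) distribution up to g-1 is asymptotic to its largest (last) term. -/
open Filter Finset

private lemma aux_pos (m s : ℕ) (hs : s ≤ m) (x : ℝ) (hx0 : 0 < x) (hx1 : x < 1) :
    0 < (m.choose s : ℝ) * x ^ (2 * s) * (1 - x ^ 2) ^ (m - s) := by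
  have h1 : 0 < (m.choose s : ℝ) := by
    exact_mod_cast Nat.choose_pos hs
  have h2 : 0 < 1 - x ^ 2 := by nlinarith
  positivity

private lemma aux_ratio_eq (m s : ℕ) (hs : s + 1 ≤ m) (x : ℝ) (hx0 : 0 < x) (hx1 : x < 1) :
    ((m.choose s : ℝ) * x ^ (2 * s) * (1 - x ^ 2) ^ (m - s)) /
      ((m.choose (s + 1) : ℝ) * x ^ (2 * (s + 1)) * (1 - x ^ 2) ^ (m - (s + 1))) =
    ((s : ℝ) + 1) * (1 - x ^ 2) / (((m : ℝ) - s) * x ^ 2) := by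
  have hsm : s ≤ m := le_trans (Nat.le_succ s) hs
  have key : (m.choose (s + 1) : ℝ) * ((s : ℝ) + 1) = (m.choose s : ℝ) * ((m : ℝ) - s) := by
    have h := congrArg (Nat.cast : ℕ → ℝ) (Nat.choose_succ_right_eq m s)
    push_cast [Nat.cast_sub hsm] at h
    linarith
  have hms : m - s = (m - (s + 1)) + 1 := by omega
  have hb : (0 : ℝ) < (m.choose (s + 1) : ℝ) := by exact_mod_cast Nat.choose_pos hs
  have h2 : (0 : ℝ) < 1 - x ^ 2 := by nlinarith
  have hmsr : (0 : ℝ) < (m : ℝ) - s := by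
    have : (s : ℝ) < m := by exact_mod_cast hs
    linarith
  have hxne : x ≠ 0 := ne_of_gt hx0
  have hbne : (m.choose (s + 1) : ℝ) ≠ 0 := ne_of_gt hb
  have h2ne : (1 : ℝ) - x ^ 2 ≠ 0 := ne_of_gt h2
  have h2kne : ((1 : ℝ) - x ^ 2) ^ (m - (s + 1)) ≠ 0 := pow_ne_zero _ h2ne
  have hXne : x ^ (2 * s) ≠ 0 := pow_ne_zero _ hxne
  have hmne : (m : ℝ) - s ≠ 0 := ne_of_gt hmsr
  rw [hms, show 2 * (s + 1) = 2 * s + 2 by ring, pow_add, pow_succ]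
  rw [div_eq_div_iff (by positivity) (by positivity)]
  linear_combination (-(x ^ (2 * s) * (1 - x ^ 2) ^ (m - (s + 1)) * x ^ 2 * (1 - x ^ 2))) * key

private lemma aux_consec (s : ℕ) (m : ℕ → ℕ) (p : ℕ → ℝ)
    (hp0 : Tendsto p atTop (nhds 0))
    (hmp2 : Tendsto (fun n : ℕ => (m n : ℝ) * p n ^ 2) atTop atTop) :
    Tendsto (fun n : ℕ => ((s : ℝ) + 1) * (1 - p n ^ 2) / (((m n : ℝ) - s) * p n ^ 2))
      atTop (nhds 0) := by
  have hq0 : Tendsto (fun n => p n ^ 2) atTop (nhds 0) := by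
    have := hp0.pow 2; simpa using this
  have hnum : Tendsto (fun n => ((s : ℝ) + 1) * (1 - p n ^ 2)) atTop (nhds (((s : ℝ) + 1) * 1)) := by
    exact Tendsto.const_mul _ (by simpa using (tendsto_const_nhds.sub hq0))
  have hden : Tendsto (fun n => ((m n : ℝ) - s) * p n ^ 2) atTop atTop := by
    have h1 : Tendsto (fun n => -((s : ℝ) * p n ^ 2)) atTop (nhds (-((s : ℝ) * 0))) :=
      ((hq0.const_mul (s : ℝ)).neg)
    have := Tendsto.add_atTop (by simpa using h1) hmp2
    apply this.congr
    intro n; ring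
  simpa using hnum.div_atTop hden

/-- The left tail of Bin(m, p²) up to g-1 is asymptotic to its last term when
m → ∞, p → 0, and m p² → ∞. -/
theorem stmt_16 (g : ℕ) (hg : 1 ≤ g) (m : ℕ → ℕ) (p : ℕ → ℝ)
    (hgm : ∀ n, g - 1 ≤ m n) (hp : ∀ n, 0 < p n ∧ p n < 1)
    (hp0 : Filter.Tendsto p Filter.atTop (nhds 0))
    (hm : Filter.Tendsto m Filter.atTop Filter.atTop)
    (hmp2 : Filter.Tendsto (fun n : ℕ => (m n : ℝ) * p n ^ 2) Filter.atTop Filter.atTop) :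
    Filter.Tendsto
      (fun n : ℕ =>
        (∑ s ∈ Finset.range g,
          ((m n).choose s : ℝ) * p n ^ (2 * s) * (1 - p n ^ 2) ^ (m n - s)) /
        (((m n).choose (g - 1) : ℝ) * p n ^ (2 * (g - 1)) *
          (1 - p n ^ 2) ^ (m n - (g - 1))))
      Filter.atTop (nhds 1) := by
  set F : ℕ → ℕ → ℝ := fun s n =>
    ((m n).choose s : ℝ) * p n ^ (2 * s) * (1 - p n ^ 2) ^ (m n - s) with hF
  have hFpos : ∀ s n, s ≤ m n → 0 < F s n := fun s n hs =>
    aux_pos (m n) s hs (p n) (hp n).1 (hp n).2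
  have hmain : ∀ t, t ≤ g - 1 →
      Tendsto (fun n => F (g - 1 - t) n / F (g - 1) n) atTop
        (nhds (if t = 0 then 1 else 0)) := by
    intro t
    induction t with
    | zero =>
      intro _
      simp only [Nat.sub_zero, if_pos rfl]
      have : (fun n => F (g - 1) n / F (g - 1) n) = fun _ => (1 : ℝ) := by
        funext n
        exact div_self (ne_of_gt (hFpos _ n (hgm n)))
      rw [this]; exact tendsto_const_nhds
    | succ t ih =>
      intro ht
      have ht' : t ≤ g - 1 := le_trans (Nat.le_succ t) ht
      set s := g - 1 - (t + 1) with hsdef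
      have hs1 : s + 1 = g - 1 - t := by omega
      have hsm : ∀ n, s + 1 ≤ m n := fun n => by
        have := hgm n; omega
      have hsplit : ∀ n, F s n / F (g - 1) n
          = (F s n / F (s + 1) n) * (F (s + 1) n / F (g - 1) n) := by
        intro n
        rw [div_mul_div_comm, mul_comm (F s n),
          mul_div_mul_left _ _ (ne_of_gt (hFpos (s + 1) n (hsm n)))]
      have hA : Tendsto (fun n => F s n / F (s + 1) n) atTop (nhds 0) := by
        have heq : ∀ n, F s n / F (s + 1) n
            = ((s : ℝ) + 1) * (1 - p n ^ 2) / (((m n : ℝ) - s) * p n ^ 2) := fun n =>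
          aux_ratio_eq (m n) s (hsm n) (p n) (hp n).1 (hp n).2
        simpa [heq] using aux_consec s m p hp0 hmp2
      have hB := ih ht'
      rw [← hs1] at hB
      have hAB := hA.mul hB
      simp only [zero_mul] at hAB
      simp only [if_neg (Nat.succ_ne_zero t)]
      exact hAB.congr (fun n => (hsplit n).symm)
  have hrw : ∀ n, (∑ s ∈ Finset.range g, F s n) / F (g - 1) n
      = ∑ s ∈ Finset.range g, F s n / F (g - 1) n := fun n => Finset.sum_div _ _ _
  have hsum : Tendsto (fun n => ∑ s ∈ Finset.range g, F s n / F (g - 1) n) atTop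
      (nhds (∑ s ∈ Finset.range g, if s = g - 1 then (1 : ℝ) else 0)) := by
    apply tendsto_finset_sum
    intro s hs
    have hsle : s ≤ g - 1 := by
      have := Finset.mem_range.mp hs; omega
    have hteq : g - 1 - (g - 1 - s) = s := by omega
    have hlim := hmain (g - 1 - s) (by omega)
    rw [hteq] at hlim
    have hiff : g - 1 - s = 0 ↔ s = g - 1 := by omega
    simp only [hiff] at hlim
    exact hlim
  have hone : (∑ s ∈ Finset.range g, if s = g - 1 then (1 : ℝ) else 0) = 1 := by
    rw [Finset.sum_ite_eq' (Finset.range g) (g - 1) (fun _ => (1 : ℝ))]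
    rw [if_pos (Finset.mem_range.mpr (by omega))]
  rw [hone] at hsum
  exact hsum.congr (fun n => (hrw n).symm)
end
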